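/- Let ρ_b = (1/2)[[1,0,0,b],[0,0,0,0],[0,0,0,0],[b,0,0,1]] for b ∈ [0,1]. Then both reduced states of ρ_b equal I/2, so each subsystem battery capacity is zero; and after conjugating by the permutation U₃₄ (swapping basis states 3 and 4), the reduced states of ρ̃_b = U₃₄ρ_bU₃₄† have largest eigenvalues (1/2)(1+b) and 1/2·(1) + b/2 respectively, giving Sub(ρ̃_b) = 2 + 2b for the longitudinal-field XX model with E = α = J = 1 (subsystem Hamiltonian level gap 2). -/

import Mathlib

open Matrix
open scoped ComplexOrder

/-- Partial trace over the second qubit. -/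
def trB (ρ : Matrix (Fin 4) (Fin 4) ℂ) : Matrix (Fin 2) (Fin 2) ℂ :=
  !![ρ 0 0 + ρ 1 1, ρ 0 2 + ρ 1 3;
     ρ 2 0 + ρ 3 1, ρ 2 2 + ρ 3 3]

/-- Partial trace over the first qubit. -/
def trA (ρ : Matrix (Fin 4) (Fin 4) ℂ) : Matrix (Fin 2) (Fin 2) ℂ :=
  !![ρ 0 0 + ρ 2 2, ρ 0 1 + ρ 2 3;
     ρ 1 0 + ρ 3 2, ρ 1 1 + ρ 3 3]

/-- The permutation matrix swapping basis states 3 and 4. -/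
def U34 : Matrix (Fin 4) (Fin 4) ℂ :=
  !![1, 0, 0, 0;
     0, 1, 0, 0;
     0, 0, 0, 1;
     0, 0, 1, 0]

/-- The Bell-like state `ρ_b`. -/
noncomputable def rhoBell (b : ℝ) : Matrix (Fin 4) (Fin 4) ℂ :=
  (1 / 2 : ℂ) • !![1, 0, 0, (b : ℂ);
                   0, 0, 0, 0;
                   0, 0, 0, 0;
                   (b : ℂ), 0, 0, 1]

/-- The largest eigenvalue of a Hermitian matrix. -/
noncomputable def maxEig {n : ℕ} {M : Matrix (Fin n) (Fin n) ℂ}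
    (hM : M.IsHermitian) : ℝ := ⨆ i, hM.eigenvalues i


lemma my_trace_eq {n : ℕ} {A : Matrix (Fin n) (Fin n) ℂ} (hA : A.IsHermitian) :
    A.trace = ∑ i, (hA.eigenvalues i : ℂ) := by
  conv_lhs => rw [hA.spectral_theorem]
  rw [Unitary.conjStarAlgAut_apply]
  rw [Matrix.trace_mul_cycle]
  have h1 : (star (hA.eigenvectorUnitary : Matrix (Fin n) (Fin n) ℂ)) *
      (hA.eigenvectorUnitary : Matrix (Fin n) (Fin n) ℂ) = 1 :=
    Matrix.mem_unitaryGroup_iff'.mp hA.eigenvectorUnitary.2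
  rw [h1, Matrix.one_mul, Matrix.trace_diagonal]
  simp

lemma fin2_iSup (f : Fin 2 → ℝ) : (⨆ i, f i) = max (f 0) (f 1) := by
  apply le_antisymm
  · exact ciSup_le (by intro i; fin_cases i <;> simp)
  · refine max_le ?_ ?_ <;> exact le_ciSup (Set.finite_range f).bddAbove _

lemma max_of_sum_sq (x y s c : ℝ) (hc : 0 ≤ c) (hs : x + y = s)
    (hd : (x - y)^2 = c^2) : max x y = (s + c)/2 := by
  have h : |x - y| = c := by
    have := abs_nonneg (x - y); nlinarith [sq_abs (x - y)]
  rcases (abs_eq hc).mp h with h' | h'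
  · have hxy : y ≤ x := by linarith
    rw [max_eq_left hxy]; linarith
  · have hxy : x ≤ y := by linarith
    rw [max_eq_right hxy]; linarith

lemma maxEig_fin2 {M : Matrix (Fin 2) (Fin 2) ℂ} (hM : M.IsHermitian)
    (s p c : ℝ) (hc : 0 ≤ c) (ht : M.trace = (s : ℂ)) (hd : M.det = (p : ℂ))
    (hcp : s^2 - 4*p = c^2) : maxEig hM = (s + c)/2 := by
  have h1 : hM.eigenvalues 0 + hM.eigenvalues 1 = s := by
    have := my_trace_eq hM
    rw [ht, Fin.sum_univ_two] at this
    exact_mod_cast this.symm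
  have h2 : hM.eigenvalues 0 * hM.eigenvalues 1 = p := by
    have := hM.det_eq_prod_eigenvalues
    rw [hd, Fin.prod_univ_two] at this
    norm_cast at this
    exact RCLike.ofReal_injective (K := ℂ) this.symm
  have := max_of_sum_sq (hM.eigenvalues 0) (hM.eigenvalues 1) s c hc h1
    (by rw [show (hM.eigenvalues 0 - hM.eigenvalues 1)^2 =
        (hM.eigenvalues 0 + hM.eigenvalues 1)^2 -
        4*(hM.eigenvalues 0 * hM.eigenvalues 1) from by ring, h1, h2]; exact hcp)
  rw [maxEig, fin2_iSup]
  exact this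

/-- For the Bell-like family `ρ_b` both reduced states are maximally mixed (zero
subsystem capacity), while after conjugation by `U₃₄` the reduced states have
largest eigenvalues `(1+b)/2` and `1`, giving total subsystem capacity `2 + 2b`
(subsystem Hamiltonian level gap 2). -/
theorem stmt_9
    (b : ℝ) (hb0 : 0 ≤ b) (hb1 : b ≤ 1)
    (hA : (trB (U34 * rhoBell b * U34ᴴ)).IsHermitian)
    (hB : (trA (U34 * rhoBell b * U34ᴴ)).IsHermitian) :
    trB (rhoBell b) = (1 / 2 : ℂ) • 1
    ∧ trA (rhoBell b) = (1 / 2 : ℂ) • 1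
    ∧ maxEig hA = (1 + b) / 2
    ∧ maxEig hB = 1
    ∧ 2 * (2 * maxEig hA - 1) + 2 * (2 * maxEig hB - 1) = 2 + 2 * b := by
  have hMA : trB (U34 * rhoBell b * U34ᴴ) = !![(1/2 : ℂ), (b:ℂ)/2; (b:ℂ)/2, 1/2] := by
    ext i j
    fin_cases i <;> fin_cases j <;>
      simp [trB, U34, rhoBell, Matrix.mul_apply, Fin.sum_univ_four,
        Matrix.conjTranspose_apply] <;> ring
  have hMB : trA (U34 * rhoBell b * U34ᴴ) = !![(1 : ℂ), 0; 0, 0] := by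
    ext i j
    fin_cases i <;> fin_cases j <;>
      simp [trA, U34, rhoBell, Matrix.mul_apply, Fin.sum_univ_four,
        Matrix.conjTranspose_apply] <;> ring
  have hEA : maxEig hA = (1 + b)/2 := by
    apply maxEig_fin2 hA 1 ((1 - b^2)/4) b hb0
    · rw [hMA, Matrix.trace_fin_two_of]; norm_num
    · rw [hMA, Matrix.det_fin_two_of]; push_cast; ring
    · ring
  have hEB : maxEig hB = 1 := by
    have := maxEig_fin2 hB 1 0 1 zero_le_one
      (by rw [hMB, Matrix.trace_fin_two_of]; norm_num)
      (by rw [hMB, Matrix.det_fin_two_of]; norm_num) (by norm_num)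
    linarith
  refine ⟨?_, ?_, hEA, hEB, by rw [hEA, hEB]; ring⟩
  · ext i j
    fin_cases i <;> fin_cases j <;>
      simp [trB, rhoBell, Matrix.one_apply, Matrix.vecHead, Matrix.vecTail] <;> norm_num
  · ext i j
    fin_cases i <;> fin_cases j <;>
      simp [trA, rhoBell, Matrix.one_apply, Matrix.vecHead, Matrix.vecTail] <;> norm_num
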